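/- Let p be an odd prime, n, k positive integers, g = gcd(n,k), and suppose n/g is even. Let c ∈ 𝔽_{p^n}, c ≠ 0, be such that c⁻¹ = z^{p^k} + z for some z ∈ 𝔽_{p^n}, z ≠ 0. Then the equation γ^{p^k} + γ + (1 − c⁻¹) = 0 has exactly p^g solutions γ in 𝔽_{p^n}. -/

import Mathlib

private lemma geom_sum_mul_nat (a : ℕ) (ha : 1 ≤ a) :
    ∀ t : ℕ, (a - 1) * ∑ i ∈ Finset.range t, a ^ i = a ^ t - 1 := by
  intro t
  induction t with
  | zero => simp
  | succ t ih =>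
    rw [Finset.sum_range_succ, Nat.mul_add, ih]
    have h1 : 1 ≤ a ^ t := Nat.one_le_pow _ _ (by omega)
    have h2 : (a - 1) * a ^ t = a * a ^ t - a ^ t := by rw [Nat.sub_mul, one_mul]
    have h3 : a ^ (t + 1) = a * a ^ t := by rw [pow_succ, mul_comm]
    have h4 : a ^ t ≤ a * a ^ t := Nat.le_mul_of_pos_left _ (by omega)
    omega

private lemma geom_sum_mod_two (a : ℕ) (ha : a % 2 = 1) :
    ∀ t : ℕ, (∑ i ∈ Finset.range t, a ^ i) % 2 = t % 2 := by
  intro t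
  induction t with
  | zero => simp
  | succ t ih =>
    rw [Finset.sum_range_succ]
    have h : a ^ t % 2 = 1 := by rw [Nat.pow_mod, ha, one_pow]; rfl
    omega

private lemma pow_sub_one_dvd_pow_sub_one (p a b : ℕ) (h : a ∣ b) :
    p ^ a - 1 ∣ p ^ b - 1 := by
  obtain ⟨t, rfl⟩ := h
  rw [pow_mul]
  simpa using Nat.sub_dvd_pow_sub_pow (p ^ a) 1 t

private lemma gcd_step (p : ℕ) (hp : 1 ≤ p) (a b : ℕ) (hb : 0 < b) (hba : b ≤ a) :
    Nat.gcd (p ^ a - 1) (p ^ b - 1) = Nat.gcd (p ^ (a - b) - 1) (p ^ b - 1) := by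
  have e : p ^ a - 1 = (p ^ (a - b) - 1) + (p ^ b - 1) * p ^ (a - b) := by
    have h3 : p ^ (a - b) * p ^ b = p ^ a := by
      rw [← pow_add]; congr 1; omega
    have h4 : (p ^ b - 1) * p ^ (a - b) = p ^ b * p ^ (a - b) - p ^ (a - b) := by
      rw [Nat.sub_mul, one_mul]
    have h6 : p ^ b * p ^ (a - b) = p ^ a := by rw [mul_comm]; exact h3
    have h7 : 1 ≤ p ^ (a - b) := Nat.one_le_pow _ _ (by omega)
    have h8 : 1 ≤ p ^ b := Nat.one_le_pow _ _ (by omega)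
    have h5 : p ^ (a - b) ≤ p ^ b * p ^ (a - b) := Nat.le_mul_of_pos_left _ (by omega)
    omega
  rw [e, Nat.gcd_add_mul_left_left]

private lemma gcd_pow_sub_one (p : ℕ) (hp : 1 ≤ p) :
    ∀ N a b, a + b ≤ N → Nat.gcd (p ^ a - 1) (p ^ b - 1) = p ^ Nat.gcd a b - 1 := by
  intro N
  induction N with
  | zero =>
    intro a b h
    rw [Nat.le_zero] at h
    have ha : a = 0 := by omega
    have hb : b = 0 := by omega
    subst ha; subst hb; simp
  | succ N ih =>
    intro a b hab
    rcases Nat.eq_zero_or_pos b with rfl | hb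
    · simp
    rcases le_or_gt b a with hba | hba
    · rw [gcd_step p hp a b hb hba, ih (a - b) b (by omega),
        Nat.gcd_sub_self_left hba]
    · rw [Nat.gcd_comm (p ^ a - 1), Nat.gcd_comm a b]
      rcases Nat.eq_zero_or_pos a with rfl | ha
      · simp
      rw [gcd_step p hp b a ha (le_of_lt hba), ih (b - a) a (by omega),
        Nat.gcd_sub_self_left (le_of_lt hba)]

theorem linearized_trinomial_p_pow_g_roots (p n k : ℕ) [Fact p.Prime] (hp2 : p ≠ 2)
    (hn : 0 < n) (hk : 0 < k) (heven : Even (n / Nat.gcd n k))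
    (c : GaloisField p n) (hc : c ≠ 0)
    (hz : ∃ z : GaloisField p n, z ≠ 0 ∧ c⁻¹ = z ^ (p ^ k) + z) :
    Nat.card {γ : GaloisField p n // γ ^ (p ^ k) + γ + (1 - c⁻¹) = 0} =
      p ^ Nat.gcd n k := by
  classical
  obtain ⟨z, hz0, hzc⟩ := hz
  have hpprime : p.Prime := Fact.out
  have hp3 : 3 ≤ p := by
    have := hpprime.two_le; omega
  set g := Nat.gcd n k with hgdef
  have hg : 0 < g := Nat.gcd_pos_of_pos_left _ hn
  have hgn : g ∣ n := Nat.gcd_dvd_left n k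
  have hgk : g ∣ k := Nat.gcd_dvd_right n k
  set d := p ^ g - 1 with hd
  set m := p ^ k - 1 with hm
  set N := p ^ n - 1 with hN
  have hpg3 : 3 ≤ p ^ g := by
    calc 3 ≤ p := hp3
    _ = p ^ 1 := (pow_one p).symm
    _ ≤ p ^ g := Nat.pow_le_pow_right (by omega) hg
  have hpk3 : 3 ≤ p ^ k := by
    calc 3 ≤ p := hp3
    _ = p ^ 1 := (pow_one p).symm
    _ ≤ p ^ k := Nat.pow_le_pow_right (by omega) hk
  have hpn3 : 3 ≤ p ^ n := by
    calc 3 ≤ p := hp3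
    _ = p ^ 1 := (pow_one p).symm
    _ ≤ p ^ n := Nat.pow_le_pow_right (by omega) hn
  have hd2 : 2 ≤ d := by omega
  have hd0 : d ≠ 0 := by omega
  have hN0 : N ≠ 0 := by omega
  have hm0 : m ≠ 0 := by omega
  -- p is odd
  have hpodd : p % 2 = 1 := Nat.odd_iff.mp (hpprime.odd_of_ne_two hp2)
  have hpgodd : p ^ g % 2 = 1 := by rw [Nat.pow_mod, hpodd, one_pow]; rfl
  -- k / g is odd
  have hkg_odd : (k / g) % 2 = 1 := by
    by_contra hcon
    have hkeven : 2 * g ∣ k := by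
      have h1 : g * (k / g) = k := Nat.mul_div_cancel' hgk
      have h2 : (k / g) % 2 = 0 := by omega
      obtain ⟨u, hu⟩ := Nat.dvd_of_mod_eq_zero h2
      rw [hu] at h1
      exact ⟨u, by rw [← h1]; ring⟩
    have hneven : 2 * g ∣ n := by
      have h1 : g * (n / g) = n := Nat.mul_div_cancel' hgn
      obtain ⟨u, hu⟩ := heven
      rw [hu] at h1
      exact ⟨u, by rw [← h1]; ring⟩
    have : 2 * g ∣ g := Nat.dvd_gcd hneven hkeven
    have := Nat.le_of_dvd hg this
    omega
  -- n / g is even : 2g ∣ n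
  have h2gn : 2 * g ∣ n := by
    have h1 : g * (n / g) = n := Nat.mul_div_cancel' hgn
    obtain ⟨u, hu⟩ := heven
    rw [hu] at h1
    exact ⟨u, by rw [← h1]; ring⟩
  -- m = d * m' with m' odd
  set t := k / g with ht
  set m' := ∑ i ∈ Finset.range t, (p ^ g) ^ i with hm'
  have hdm' : d * m' = m := by
    have h2 : (p ^ g) ^ t = p ^ k := by
      rw [← pow_mul]; congr 1; exact Nat.mul_div_cancel' hgk
    rw [hd, hm, ← h2, hm']
    exact geom_sum_mul_nat (p ^ g) (by omega) t
  have hm'odd : Odd m' := by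
    rw [Nat.odd_iff]
    rw [hm', geom_sum_mod_two _ hpgodd t]
    exact hkg_odd
  -- divisibilities
  have hdN : d ∣ N := pow_sub_one_dvd_pow_sub_one p g n hgn
  have h2dN : 2 * d ∣ N := by
    have h1 : p ^ (2 * g) - 1 ∣ N := pow_sub_one_dvd_pow_sub_one p (2 * g) n h2gn
    have h2 : 2 * d ∣ p ^ (2 * g) - 1 := by
      have e : p ^ (2 * g) - 1 = d * (p ^ g + 1) := by
        have e1 : p ^ (2 * g) = p ^ g * p ^ g := by rw [two_mul, pow_add]
        have e2 : d * (p ^ g + 1) = p ^ g * (p ^ g + 1) - (p ^ g + 1) := by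
          rw [hd, Nat.sub_mul, one_mul]
        have e3 : p ^ g * (p ^ g + 1) = p ^ g * p ^ g + p ^ g := by ring
        have e4 : p ^ g + 1 ≤ p ^ g * (p ^ g + 1) := Nat.le_mul_of_pos_left _ (by omega)
        omega
      rw [e]
      have : 2 ∣ p ^ g + 1 := by omega
      obtain ⟨u, hu⟩ := this
      exact ⟨u, by rw [hu]; ring⟩
    exact dvd_trans h2 h1
  have hgcdmN : Nat.gcd m N = d := by
    rw [hm, hN, hd, gcd_pow_sub_one p (by omega) (k + n) k n le_rfl]
    congr 1
    rw [Nat.gcd_comm]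
  -- field facts
  have hcharF : CharP (GaloisField p n) p := by infer_instance
  have hfinF : Fintype (GaloisField p n) := Fintype.ofFinite (GaloisField p n)
  have hcardF : Fintype.card (GaloisField p n) = p ^ n := by
    rw [Fintype.card_eq_nat_card]
    exact GaloisField.card p n hn.ne'
  have h2F : (2 : (GaloisField p n)) ≠ 0 := by
    have : ((2 : ℕ) : (GaloisField p n)) ≠ 0 := by
      rw [Ne, CharP.cast_eq_zero_iff (GaloisField p n) p 2]
      intro hdvd
      have := Nat.le_of_dvd (by omega) hdvd
      omega
    simpa using this
  have hone_ne_neg : (1 : (GaloisField p n)) ≠ -1 := by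
    intro h
    apply h2F
    linear_combination h
  -- cyclic generator of units
  obtain ⟨ζu, hζu⟩ := IsCyclic.exists_ofOrder_eq_natCard (α := (GaloisField p n)ˣ)
  have hcardU : Nat.card (GaloisField p n)ˣ = N := by
    rw [Nat.card_eq_fintype_card, Fintype.card_units, hcardF]
  rw [hcardU] at hζu
  -- element ξ of (GaloisField p n) with ξ ^ d = -1
  have hexists_xi : ∃ ξ : (GaloisField p n), ξ ^ d = -1 := by
    set ξu := ζu ^ (N / (2 * d)) with hξu
    have hordξ : orderOf ξu = 2 * d := by
      have hpos : N / (2 * d) ≠ 0 :=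
        (Nat.div_pos (Nat.le_of_dvd (by omega) h2dN) (by omega)).ne'
      rw [hξu, orderOf_pow_of_dvd hpos (by rw [hζu]; exact Nat.div_dvd_of_dvd h2dN),
        hζu, Nat.div_div_self h2dN hN0]
    set vu := ξu ^ d with hvu
    have hordv : orderOf vu = 2 := by
      rw [hvu, orderOf_pow_of_dvd hd0 (by rw [hordξ]; exact ⟨2, by ring⟩),
        hordξ, Nat.mul_div_cancel _ (by omega : 0 < d)]
    have hv2 : vu ^ 2 = 1 := by rw [← hordv]; exact pow_orderOf_eq_one vu
    have hv1 : vu ≠ 1 := by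
      intro h
      rw [h, orderOf_one] at hordv
      omega
    have hvF : ((vu : (GaloisField p n)) - 1) * ((vu : (GaloisField p n)) + 1) = 0 := by
      have : ((vu : (GaloisField p n))) ^ 2 = 1 := by
        rw [← Units.val_pow_eq_pow_val, hv2, Units.val_one]
      linear_combination this
    rcases mul_eq_zero.mp hvF with h | h
    · exfalso
      apply hv1
      have : (vu : (GaloisField p n)) = 1 := by linear_combination h
      exact Units.ext (by simpa using this)
    · refine ⟨(ξu : (GaloisField p n)), ?_⟩
      rw [← Units.val_pow_eq_pow_val, ← hvu]
      linear_combination h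
  obtain ⟨ξ, hξ⟩ := hexists_xi
  have hξ0 : ξ ≠ 0 := by
    intro h
    rw [h, zero_pow hd0] at hξ
    exact one_ne_zero (α := GaloisField p n) (by linear_combination hξ)
  -- primitive d-th root of unity
  have hexists_prim : ∃ ζ : (GaloisField p n), IsPrimitiveRoot ζ d := by
    set ζd := ζu ^ (N / d) with hζd
    have hordζd : orderOf ζd = d := by
      have hpos : N / d ≠ 0 :=
        (Nat.div_pos (Nat.le_of_dvd (by omega) hdN) (by omega)).ne'
      rw [hζd, orderOf_pow_of_dvd hpos (by rw [hζu]; exact Nat.div_dvd_of_dvd hdN),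
        hζu, Nat.div_div_self hdN hN0]
    refine ⟨(ζd : (GaloisField p n)), ?_⟩
    have : orderOf ((ζd : (GaloisField p n))) = d := by rw [orderOf_units, hordζd]
    rw [← this]
    exact IsPrimitiveRoot.orderOf _
  obtain ⟨ζ, hζ⟩ := hexists_prim
  -- count of d-th roots of unity
  have hcard1 : Fintype.card {x : (GaloisField p n) // x ^ d = 1} = d := by
    rw [Fintype.card_subtype]
    have hfe : Finset.filter (fun x : GaloisField p n => x ^ d = 1) Finset.univ =
        Polynomial.nthRootsFinset d (1 : GaloisField p n) := by
      ext x
      simp [Polynomial.mem_nthRootsFinset (by omega : 0 < d)]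
    rw [hfe]
    exact hζ.card_nthRootsFinset
  -- count of solutions of x ^ d = -1
  have hcardneg : Fintype.card {x : (GaloisField p n) // x ^ d = -1} = d := by
    refine Eq.trans (Fintype.card_congr ?_) hcard1
    refine ⟨fun y => ⟨ξ⁻¹ * y, ?_⟩, fun x => ⟨ξ * x, ?_⟩, ?_, ?_⟩
    · rw [mul_pow, inv_pow, hξ, y.2]
      simp [inv_neg]
    · rw [mul_pow, hξ, x.2, mul_one]
    · intro y
      apply Subtype.ext
      field_simp
    · intro x
      apply Subtype.ext
      field_simp
  -- particular solution γ₀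
  have h2pow : (2 : (GaloisField p n)) ^ (p ^ k) = 2 := by
    have h := add_pow_char_pow (R := GaloisField p n) (x := 1) (y := 1) (p := p) (n := k)
    norm_num at h
    exact h
  have h2invpow : (2 : (GaloisField p n))⁻¹ ^ (p ^ k) = (2 : (GaloisField p n))⁻¹ := by
    rw [inv_pow, h2pow]
  set γ₀ : (GaloisField p n) := z - (2 : (GaloisField p n))⁻¹ with hγ₀def
  have hγ₀ : γ₀ ^ (p ^ k) + γ₀ = c⁻¹ - 1 := by
    rw [hγ₀def, sub_pow_char_pow, h2invpow]
    have h2inv : (2 : (GaloisField p n))⁻¹ + (2 : (GaloisField p n))⁻¹ = 1 := by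
      rw [← two_mul, mul_inv_cancel₀ h2F]
    linear_combination -hzc - h2inv
  -- the main predicate equivalence
  have hpk : p ^ k = m + 1 := by omega
  have key : ∀ γ : (GaloisField p n), (γ ^ (p ^ k) + γ + (1 - c⁻¹) = 0) ↔
      ((γ - γ₀ = 0) ∨ ((γ - γ₀) ^ d = -1)) := by
    intro γ
    set x := γ - γ₀ with hx
    have e0 : x ^ (p ^ k) = γ ^ (p ^ k) - γ₀ ^ (p ^ k) := by
      rw [hx, sub_pow_char_pow]
    have e1 : γ ^ (p ^ k) + γ + (1 - c⁻¹) = x ^ (p ^ k) + x := by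
      rw [e0, hx]
      linear_combination hγ₀
    rw [e1]
    have hfac : x ^ (p ^ k) + x = (x ^ m + 1) * x := by
      rw [hpk, pow_succ]
      ring
    constructor
    · intro h
      rw [hfac] at h
      rcases mul_eq_zero.mp h with h1 | h2
      · right
        have hxm : x ^ m = -1 := by linear_combination h1
        have hx0 : x ≠ 0 := by
          intro h0
          rw [h0, zero_pow hm0] at hxm
          exact one_ne_zero (α := GaloisField p n) (by linear_combination hxm)
        have hxN : x ^ N = 1 := by
          have := FiniteField.pow_card_sub_one_eq_one x hx0
          rwa [hcardF] at this
        have hx2m : x ^ (2 * m) = 1 := by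
          rw [mul_comm, pow_mul, hxm]
          ring
        have hx2d : x ^ (2 * d) = 1 := by
          rw [← orderOf_dvd_iff_pow_eq_one]
          have hdvd : orderOf x ∣ Nat.gcd (2 * m) N :=
            Nat.dvd_gcd (orderOf_dvd_of_pow_eq_one hx2m) (orderOf_dvd_of_pow_eq_one hxN)
          have hupper : Nat.gcd (2 * m) N ∣ 2 * d := by
            rw [← hgcdmN, ← Nat.gcd_mul_left 2 m N]
            exact Nat.gcd_dvd_gcd_of_dvd_right _ (dvd_mul_left N 2)
          exact hdvd.trans hupper
        have hsq : (x ^ d - 1) * (x ^ d + 1) = 0 := by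
          have : (x ^ d) ^ 2 = 1 := by
            rw [← pow_mul, mul_comm]
            exact hx2d
          linear_combination this
        rcases mul_eq_zero.mp hsq with h3 | h4
        · exfalso
          have hxd1 : x ^ d = 1 := by linear_combination h3
          have : x ^ m = 1 := by
            rw [← hdm', pow_mul, hxd1, one_pow]
          rw [hxm] at this
          exact hone_ne_neg this.symm
        · linear_combination h4
      · left
        exact h2
    · intro h
      rcases h with h0 | hxd
      · rw [h0]
        simp [zero_pow (by positivity : p ^ k ≠ 0)]
      · have hxm : x ^ m = -1 := by
          rw [← hdm', pow_mul, hxd]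
          exact hm'odd.neg_one_pow
        rw [hfac, hxm]
        ring
  -- final counting
  have hequiv : {γ : (GaloisField p n) // γ ^ (p ^ k) + γ + (1 - c⁻¹) = 0} ≃
      {x : (GaloisField p n) // x = 0 ∨ x ^ d = -1} :=
    Equiv.subtypeEquiv (Equiv.subRight γ₀) (fun γ => by
      rw [key γ]
      simp [Equiv.subRight_apply, sub_eq_zero])
  rw [Nat.card_congr hequiv]
  have hdisj : ∀ x : GaloisField p n, x = 0 → x ^ d = -1 → False := by
    intro x hx0 hxd
    rw [hx0, zero_pow hd0] at hxd
    exact one_ne_zero (α := GaloisField p n) (by linear_combination hxd)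
  rw [Nat.card_eq_fintype_card, Fintype.card_subtype]
  have e1 : Finset.filter (fun x : GaloisField p n => x = 0 ∨ x ^ d = -1) Finset.univ =
      insert (0 : GaloisField p n)
        (Finset.filter (fun x : GaloisField p n => x ^ d = -1) Finset.univ) := by
    ext x
    simp only [Finset.mem_filter, Finset.mem_univ, true_and, Finset.mem_insert]
  have e2 : (0 : GaloisField p n) ∉
      Finset.filter (fun x : GaloisField p n => x ^ d = -1) Finset.univ := by
    simp only [Finset.mem_filter, Finset.mem_univ, true_and]
    intro h
    exact hdisj 0 rfl h
  rw [Fintype.card_subtype] at hcardneg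
  rw [e1, Finset.card_insert_of_notMem e2, hcardneg]
  omega
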